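/- Fix the repeated-measurement setup. Let 0 ≤ m ≤ n and assume every record probability p_m(y) is strictly positive, each conditional state ρ̂_{n|m}(y) is a faithful density matrix, and the unconditional state ρ_n is a faithful density matrix. Then the Holevo information is nonnegative: H_{n|m} ≥ 0, i.e. Σ_{y ∈ Y^m} p_m(y) S(ρ̂_{n|m}(y)) ≤ S(ρ_n). -/

import Mathlib

open Matrix Kronecker BigOperators
open scoped ComplexOrder

/-- Matrix logarithm via the spectral functional calculus (junk value `0` off Hermitian matrices). -/
noncomputable def matLog {n : Type*} [Fintype n] [DecidableEq n]
    (A : Matrix n n ℂ) : Matrix n n ℂ :=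
  if h : A.IsHermitian then
    (h.eigenvectorUnitary : Matrix n n ℂ) *
      Matrix.diagonal (fun i => (Real.log (h.eigenvalues i) : ℂ)) *
      (star h.eigenvectorUnitary : Matrix n n ℂ)
  else 0

/-- von Neumann entropy  S(ρ) = −tr(ρ log ρ). -/
noncomputable def vnEntropy {n : Type*} [Fintype n] [DecidableEq n] (A : Matrix n n ℂ) : ℝ :=
  (-(A * matLog A).trace).re

/-- Quantum relative entropy  D(ρ‖σ) = tr(ρ log ρ) − tr(ρ log σ). -/
noncomputable def relEnt {n : Type*} [Fintype n] [DecidableEq n] (ρ σ : Matrix n n ℂ) : ℝ :=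
  ((ρ * matLog ρ).trace - (ρ * matLog σ).trace).re

/-- A density matrix: positive semidefinite with unit trace. -/
def IsDensityMatrix {n : Type*} [Fintype n] (ρ : Matrix n n ℂ) : Prop :=
  ρ.PosSemidef ∧ ρ.trace = 1

/-- A faithful density matrix: positive definite with unit trace. -/
def IsFaithfulDensityMatrix {n : Type*} [Fintype n] (ρ : Matrix n n ℂ) : Prop :=
  ρ.PosDef ∧ ρ.trace = 1

/-- Partial trace over the ancilla (second factor). -/
noncomputable def trA {d k : ℕ} (X : Matrix (Fin d × Fin k) (Fin d × Fin k) ℂ) :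
    Matrix (Fin d) (Fin d) ℂ :=
  Matrix.of fun i i' => ∑ j : Fin k, X (i, j) (i', j)

/-- Partial trace over the system (first factor). -/
noncomputable def trS {d k : ℕ} (X : Matrix (Fin d × Fin k) (Fin d × Fin k) ℂ) :
    Matrix (Fin k) (Fin k) ℂ :=
  Matrix.of fun j j' => ∑ i : Fin d, X (i, j) (i, j')

/-- Unconditional one-step map  𝓥_s(ρ) = tr_a(V (ρ ⊗ σ) V*). -/
noncomputable def Vs {d k : ℕ} (V : Matrix (Fin d × Fin k) (Fin d × Fin k) ℂ)
    (σ : Matrix (Fin k) (Fin k) ℂ) (ρ : Matrix (Fin d) (Fin d) ℂ) :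
    Matrix (Fin d) (Fin d) ℂ :=
  trA (V * (ρ ⊗ₖ σ) * Vᴴ)

/-- Measurement map  𝓜_y(ρ) = tr_a((1 ⊗ M_y) V (ρ ⊗ σ) V* (1 ⊗ M_y)*). -/
noncomputable def Meas {d k : ℕ} (V : Matrix (Fin d × Fin k) (Fin d × Fin k) ℂ)
    (σ : Matrix (Fin k) (Fin k) ℂ) (M : Matrix (Fin k) (Fin k) ℂ)
    (ρ : Matrix (Fin d) (Fin d) ℂ) : Matrix (Fin d) (Fin d) ℂ :=
  trA ((((1 : Matrix (Fin d) (Fin d) ℂ)) ⊗ₖ M) * (V * (ρ ⊗ₖ σ) * Vᴴ) *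
      (((1 : Matrix (Fin d) (Fin d) ℂ)) ⊗ₖ M)ᴴ)

/-- The unnormalized conditioned state  𝓜_{y_m} ∘ ⋯ ∘ 𝓜_{y_1}(ρ₀). -/
noncomputable def measChain {d k : ℕ} {Y : Type} (V : Matrix (Fin d × Fin k) (Fin d × Fin k) ℂ)
    (σ : Matrix (Fin k) (Fin k) ℂ) (M : Y → Matrix (Fin k) (Fin k) ℂ)
    (ρ₀ : Matrix (Fin d) (Fin d) ℂ) : (m : ℕ) → (Fin m → Y) → Matrix (Fin d) (Fin d) ℂ
  | 0, _ => ρ₀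
  | (m + 1), y => Meas V σ (M (y (Fin.last m))) (measChain V σ M ρ₀ m (fun i => y i.castSucc))

/-- The probability  p_m(y)  of the record y. -/
noncomputable def recProb {d k : ℕ} {Y : Type} (V : Matrix (Fin d × Fin k) (Fin d × Fin k) ℂ)
    (σ : Matrix (Fin k) (Fin k) ℂ) (M : Y → Matrix (Fin k) (Fin k) ℂ)
    (ρ₀ : Matrix (Fin d) (Fin d) ℂ) (m : ℕ) (y : Fin m → Y) : ℝ :=
  (measChain V σ M ρ₀ m y).trace.re

/-- The conditional state  ρ̂_{n|m}(y) = 𝓥_s^{n−m}(𝓜_{y_m} ∘ ⋯ ∘ 𝓜_{y_1}(ρ₀)) / p_m(y). -/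
noncomputable def condState {d k : ℕ} {Y : Type} (V : Matrix (Fin d × Fin k) (Fin d × Fin k) ℂ)
    (σ : Matrix (Fin k) (Fin k) ℂ) (M : Y → Matrix (Fin k) (Fin k) ℂ)
    (ρ₀ : Matrix (Fin d) (Fin d) ℂ) (n m : ℕ) (y : Fin m → Y) :
    Matrix (Fin d) (Fin d) ℂ :=
  ((recProb V σ M ρ₀ m y : ℂ))⁻¹ • (Vs V σ)^[n - m] (measChain V σ M ρ₀ m y)

/-- The unconditional state  ρ_n = 𝓥_s^n(ρ₀). -/
noncomputable def uncondState {d k : ℕ} (V : Matrix (Fin d × Fin k) (Fin d × Fin k) ℂ)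
    (σ : Matrix (Fin k) (Fin k) ℂ) (ρ₀ : Matrix (Fin d) (Fin d) ℂ) (n : ℕ) :
    Matrix (Fin d) (Fin d) ℂ :=
  (Vs V σ)^[n] ρ₀

/-- The average conditional entropy  S̄_{n|m}. -/
noncomputable def avgCondEntropy {d k : ℕ} {Y : Type} [Fintype Y]
    (V : Matrix (Fin d × Fin k) (Fin d × Fin k) ℂ)
    (σ : Matrix (Fin k) (Fin k) ℂ) (M : Y → Matrix (Fin k) (Fin k) ℂ)
    (ρ₀ : Matrix (Fin d) (Fin d) ℂ) (n m : ℕ) : ℝ :=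
  ∑ y : Fin m → Y, recProb V σ M ρ₀ m y * vnEntropy (condState V σ M ρ₀ n m y)

/-- The Holevo information  H_{n|m} = S(ρ_n) − S̄_{n|m}. -/
noncomputable def holevoInfo {d k : ℕ} {Y : Type} [Fintype Y]
    (V : Matrix (Fin d × Fin k) (Fin d × Fin k) ℂ)
    (σ : Matrix (Fin k) (Fin k) ℂ) (M : Y → Matrix (Fin k) (Fin k) ℂ)
    (ρ₀ : Matrix (Fin d) (Fin d) ℂ) (n m : ℕ) : ℝ :=
  vnEntropy (uncondState V σ ρ₀ n) - avgCondEntropy V σ M ρ₀ n m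


/-! ### Auxiliary lemmas -/

section Aux

lemma kron_conjT {d k : ℕ} (A : Matrix (Fin d) (Fin d) ℂ) (B : Matrix (Fin k) (Fin k) ℂ) :
    (A ⊗ₖ B)ᴴ = Aᴴ ⊗ₖ Bᴴ := by
  ext ⟨i, j⟩ ⟨i', j'⟩
  simp [conjTranspose_apply, kroneckerMap_apply, mul_comm]

lemma trA_one_kron_comm {d k : ℕ} (A : Matrix (Fin k) (Fin k) ℂ)
    (X : Matrix (Fin d × Fin k) (Fin d × Fin k) ℂ) :
    trA ((1 ⊗ₖ A) * X) = trA (X * (1 ⊗ₖ A)) := by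
  refine Matrix.ext fun i i' => ?_
  simp only [trA, of_apply, mul_apply, kroneckerMap_apply, one_apply, Fintype.sum_prod_type,
    ite_mul, mul_ite, zero_mul, mul_zero, Finset.sum_ite_eq, Finset.mem_univ, if_true]
  simp only [Finset.sum_ite_irrel, Finset.sum_const_zero, Finset.sum_ite_eq, Finset.sum_ite_eq',
    Finset.mem_univ, if_true]
  rw [Finset.sum_comm]
  simp [mul_comm]

lemma trA_add {d k : ℕ} (X Y : Matrix (Fin d × Fin k) (Fin d × Fin k) ℂ) :
    trA (X + Y) = trA X + trA Y := by
  refine Matrix.ext fun i i' => ?_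
  simp [trA, Finset.sum_add_distrib]

lemma sum_Meas {d k : ℕ} {Y : Type} [Fintype Y]
    (V : Matrix (Fin d × Fin k) (Fin d × Fin k) ℂ) (σ : Matrix (Fin k) (Fin k) ℂ)
    (M : Y → Matrix (Fin k) (Fin k) ℂ) (hM : ∑ y : Y, (M y)ᴴ * M y = 1)
    (ρ : Matrix (Fin d) (Fin d) ℂ) :
    ∑ y : Y, Meas V σ (M y) ρ = Vs V σ ρ := by
  unfold Meas Vs
  set X := V * (ρ ⊗ₖ σ) * Vᴴ with hX
  have h1 : ∀ y, trA ((1 ⊗ₖ M y) * X * ((1 : Matrix (Fin d) (Fin d) ℂ) ⊗ₖ M y)ᴴ)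
      = trA (X * (1 ⊗ₖ ((M y)ᴴ * M y))) := by
    intro y
    rw [mul_assoc, trA_one_kron_comm, kron_conjT, conjTranspose_one, mul_assoc,
      ← Matrix.mul_kronecker_mul, Matrix.one_mul]
  have h2 : ∑ y : Y, trA (X * (1 ⊗ₖ ((M y)ᴴ * M y))) = trA (X * (1 ⊗ₖ (1 : Matrix (Fin k) (Fin k) ℂ))) := by
    rw [← hM]
    refine Matrix.ext fun i i' => ?_
    simp only [trA, of_apply, Matrix.sum_apply, Matrix.mul_apply, kroneckerMap_apply,
      Matrix.sum_apply, Finset.mul_sum]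
    rw [Finset.sum_comm]
    exact Finset.sum_congr rfl fun x _ => Finset.sum_comm
  simp only [h1, h2, Matrix.one_kronecker_one, Matrix.mul_one]

end Aux

section Lin

variable {d k : ℕ} (V : Matrix (Fin d × Fin k) (Fin d × Fin k) ℂ)
  (σ : Matrix (Fin k) (Fin k) ℂ)

lemma Vs_add (ρ₁ ρ₂ : Matrix (Fin d) (Fin d) ℂ) :
    Vs V σ (ρ₁ + ρ₂) = Vs V σ ρ₁ + Vs V σ ρ₂ := by
  unfold Vs
  rw [Matrix.add_kronecker, Matrix.mul_add, Matrix.add_mul, trA_add]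

lemma Vs_zero : Vs V σ 0 = 0 := by
  unfold Vs
  rw [Matrix.zero_kronecker, Matrix.mul_zero, Matrix.zero_mul]
  refine Matrix.ext fun i i' => ?_
  simp [trA]

lemma Vs_sum {ι : Type*} (s : Finset ι) (f : ι → Matrix (Fin d) (Fin d) ℂ) :
    Vs V σ (∑ x ∈ s, f x) = ∑ x ∈ s, Vs V σ (f x) := by
  classical
  induction s using Finset.induction_on with
  | empty => simpa using Vs_zero V σ
  | insert _ _ h ih => rw [Finset.sum_insert h, Finset.sum_insert h, Vs_add, ih]

lemma Vs_iter_sum {ι : Type*} (t : ℕ) (s : Finset ι) (f : ι → Matrix (Fin d) (Fin d) ℂ) :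
    (Vs V σ)^[t] (∑ x ∈ s, f x) = ∑ x ∈ s, (Vs V σ)^[t] (f x) := by
  induction t generalizing f with
  | zero => simp
  | succ t ih =>
      rw [Function.iterate_succ_apply, Vs_sum]
      exact ih _

end Lin

lemma sum_measChain {d k : ℕ} {Y : Type} [Fintype Y]
    (V : Matrix (Fin d × Fin k) (Fin d × Fin k) ℂ) (σ : Matrix (Fin k) (Fin k) ℂ)
    (M : Y → Matrix (Fin k) (Fin k) ℂ) (hM : ∑ y : Y, (M y)ᴴ * M y = 1)
    (ρ₀ : Matrix (Fin d) (Fin d) ℂ) (m : ℕ) :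
    ∑ y : Fin m → Y, measChain V σ M ρ₀ m y = (Vs V σ)^[m] ρ₀ := by
  induction m with
  | zero => simp [measChain]
  | succ m ih =>
      rw [Function.iterate_succ_apply', ← ih, Vs_sum]
      rw [← Equiv.sum_comp (Fin.snocEquiv (fun _ => Y)) (measChain V σ M ρ₀ (m+1)),
        Fintype.sum_prod_type, Finset.sum_comm]
      refine Finset.sum_congr rfl fun f _ => ?_
      have key : ∀ a : Y, measChain V σ M ρ₀ (m+1) (Fin.snocEquiv (fun _ => Y) (a, f))
          = Meas V σ (M a) (measChain V σ M ρ₀ m f) := by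
        intro a
        simp [measChain, Fin.snocEquiv, Fin.snoc_last, Fin.snoc_castSucc]
      simp only [key]
      exact sum_Meas V σ M hM _

section Spectral

variable {m : Type*} [Fintype m] [DecidableEq m]

lemma trace_conj_unitary {U : Matrix m m ℂ} (hU : U ∈ Matrix.unitaryGroup m ℂ)
    (X : Matrix m m ℂ) : (U * X * star U).trace = X.trace := by
  rw [Matrix.trace_mul_cycle, Matrix.mem_unitaryGroup_iff'.mp hU, Matrix.one_mul]

lemma trace_diag_conj (A : Matrix m m ℂ) (d l : m → ℂ) :
    (Matrix.diagonal d * (A * Matrix.diagonal l * star A)).trace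
      = ∑ i, ∑ j, d i * (A i j * l j * star (A i j)) := by
  have hB : ∀ i, (A * Matrix.diagonal l * star A) i i = ∑ j, A i j * l j * star (A i j) := by
    intro i
    rw [Matrix.mul_apply]
    refine Finset.sum_congr rfl fun j _ => ?_
    rw [Matrix.mul_diagonal, Matrix.star_apply]
  simp only [Matrix.trace, Matrix.diag_apply, Matrix.diagonal_mul, hB, Finset.mul_sum]

lemma trace_UDU_WLW {U W : Matrix m m ℂ} (hU : U ∈ Matrix.unitaryGroup m ℂ)
    (d l : m → ℂ) :
    ((U * Matrix.diagonal d * star U) * (W * Matrix.diagonal l * star W)).trace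
      = ∑ i, ∑ j, d i * ((star U * W) i j * l j * star ((star U * W) i j)) := by
  have hUU : U * star U = 1 := Matrix.mem_unitaryGroup_iff.mp hU
  have key : (U * Matrix.diagonal d * star U) * (W * Matrix.diagonal l * star W)
      = U * (Matrix.diagonal d * ((star U * W) * Matrix.diagonal l * star (star U * W)))
        * star U := by
    simp only [Matrix.star_mul, star_star, Matrix.mul_assoc]
    rw [show W * (Matrix.diagonal l * (star W * (U * star U))) = W * (Matrix.diagonal l * star W) by
      rw [hUU, Matrix.mul_one]]
  rw [key, trace_conj_unitary hU, trace_diag_conj]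

end Spectral

section Klein

variable {m : Type*} [Fintype m] [DecidableEq m]

lemma matLog_eq {A : Matrix m m ℂ} (h : A.IsHermitian) :
    matLog A = (h.eigenvectorUnitary : Matrix m m ℂ) *
      Matrix.diagonal (fun i => (Real.log (h.eigenvalues i) : ℂ)) *
      star (h.eigenvectorUnitary : Matrix m m ℂ) := by
  rw [matLog, dif_pos h]

lemma trace_eq_sum_eig {ρ : Matrix m m ℂ} (h : ρ.IsHermitian) :
    ρ.trace = ∑ i, (h.eigenvalues i : ℂ) := by
  conv_lhs => rw [h.spectral_theorem]
  rw [Unitary.conjStarAlgAut_apply, trace_conj_unitary h.eigenvectorUnitary.2, Matrix.trace_diagonal]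
  rfl

lemma trace_mul_matLog {ρ σ : Matrix m m ℂ} (hρ : ρ.IsHermitian) (hσ : σ.IsHermitian) :
    (ρ * matLog σ).trace = ∑ i, ∑ j, (hρ.eigenvalues i : ℂ) *
      (((star (hρ.eigenvectorUnitary : Matrix m m ℂ) * (hσ.eigenvectorUnitary : Matrix m m ℂ)) i j)
        * (Real.log (hσ.eigenvalues j) : ℂ)
        * star ((star (hρ.eigenvectorUnitary : Matrix m m ℂ) * (hσ.eigenvectorUnitary : Matrix m m ℂ)) i j)) := by
  rw [matLog_eq hσ]
  conv_lhs => rw [hρ.spectral_theorem]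
  exact trace_UDU_WLW hρ.eigenvectorUnitary.2 _ _

end Klein

lemma relEnt_nonneg {m : Type*} [Fintype m] [DecidableEq m] {ρ σ : Matrix m m ℂ}
    (hρ : IsFaithfulDensityMatrix ρ) (hσ : IsFaithfulDensityMatrix σ) :
    0 ≤ relEnt ρ σ := by
  obtain ⟨hρp, hρt⟩ := hρ
  obtain ⟨hσp, hσt⟩ := hσ
  have hρh := hρp.1
  have hσh := hσp.1
  set A : Matrix m m ℂ := star (hρh.eigenvectorUnitary : Matrix m m ℂ) *
    (hσh.eigenvectorUnitary : Matrix m m ℂ) with hA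
  have hAU : A ∈ Matrix.unitaryGroup m ℂ :=
    mul_mem (Unitary.star_mem hρh.eigenvectorUnitary.2) hσh.eigenvectorUnitary.2
  set lam := hρh.eigenvalues with hlamdef
  set mu := hσh.eigenvalues with hmudef
  set P : m → m → ℝ := fun i j => Complex.normSq (A i j) with hP
  have hPnn : ∀ i j, 0 ≤ P i j := fun i j => Complex.normSq_nonneg _
  have hlam : ∀ i, 0 < lam i := fun i => hρp.eigenvalues_pos i
  have hmu : ∀ j, 0 < mu j := fun j => hσp.eigenvalues_pos j
  -- row sums of P are 1
  have hrow : ∀ i, ∑ j, P i j = 1 := by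
    intro i
    have h1 : (A * star A) i i = 1 := by
      rw [Matrix.mem_unitaryGroup_iff.mp hAU, Matrix.one_apply_eq]
    have h2 : (A * star A) i i = ((∑ j, P i j : ℝ) : ℂ) := by
      rw [Matrix.mul_apply, Complex.ofReal_sum]
      refine Finset.sum_congr rfl fun j _ => ?_
      rw [Matrix.star_apply, Complex.star_def, Complex.mul_conj]
    have := h2.symm.trans h1
    exact_mod_cast this
  -- column sums of P are 1
  have hcol : ∀ j, ∑ i, P i j = 1 := by
    intro j
    have h1 : (star A * A) j j = 1 := by
      rw [Matrix.mem_unitaryGroup_iff'.mp hAU, Matrix.one_apply_eq]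
    have h2 : (star A * A) j j = ((∑ i, P i j : ℝ) : ℂ) := by
      rw [Matrix.mul_apply, Complex.ofReal_sum]
      refine Finset.sum_congr rfl fun i _ => ?_
      rw [Matrix.star_apply, Complex.star_def, mul_comm, Complex.mul_conj]
    have := h2.symm.trans h1
    exact_mod_cast this
  -- eigenvalue sums are 1
  have hlamsum : ∑ i, lam i = 1 := by
    have := (trace_eq_sum_eig hρh).symm.trans hρt
    rw [← Complex.ofReal_sum] at this
    exact_mod_cast this
  have hmusum : ∑ j, mu j = 1 := by
    have := (trace_eq_sum_eig hσh).symm.trans hσt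
    rw [← Complex.ofReal_sum] at this
    exact_mod_cast this
  -- trace formulas
  have t1 : ((ρ * matLog ρ).trace).re = ∑ i, lam i * Real.log (lam i) := by
    rw [trace_mul_matLog hρh hρh, Matrix.mem_unitaryGroup_iff'.mp hρh.eigenvectorUnitary.2]
    rw [Complex.re_sum]
    refine Finset.sum_congr rfl fun i _ => ?_
    rw [Finset.sum_eq_single i]
    · rw [Matrix.one_apply_eq]
      rw [star_one, mul_one, one_mul, ← Complex.ofReal_mul]
      exact Complex.ofReal_re _
    · intro j _ hj
      simp [Matrix.one_apply, (Ne.symm hj)]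
    · simp
  have t2 : ((ρ * matLog σ).trace).re = ∑ i, ∑ j, lam i * (Real.log (mu j) * P i j) := by
    rw [trace_mul_matLog hρh hσh, Complex.re_sum]
    refine Finset.sum_congr rfl fun i _ => ?_
    rw [Complex.re_sum]
    refine Finset.sum_congr rfl fun j _ => ?_
    have : A i j * (Real.log (mu j) : ℂ) * star (A i j)
        = ((Real.log (mu j) * P i j : ℝ) : ℂ) := by
      rw [mul_comm (A i j) _, mul_assoc, Complex.star_def, Complex.mul_conj]
      push_cast
      ring
    rw [← hA, this, ← Complex.ofReal_mul]
    exact Complex.ofReal_re _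
  -- the main inequality
  have step : ∑ i, ∑ j, lam i * P i j * (Real.log (mu j) - Real.log (lam i)) ≤ 0 := by
    have tw : ∀ i j, lam i * P i j * (Real.log (mu j) - Real.log (lam i))
        ≤ P i j * mu j - lam i * P i j := by
      intro i j
      have hlog : Real.log (mu j) - Real.log (lam i) ≤ mu j / lam i - 1 := by
        rw [← Real.log_div (hmu j).ne' (hlam i).ne']
        exact Real.log_le_sub_one_of_pos (div_pos (hmu j) (hlam i))
      have hdiv : lam i * (mu j / lam i) = mu j := by
        rw [← mul_div_assoc, mul_comm, mul_div_assoc, div_self (hlam i).ne', mul_one]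
      have key : lam i * (Real.log (mu j) - Real.log (lam i)) ≤ mu j - lam i := by
        have h1 := mul_le_mul_of_nonneg_left hlog (hlam i).le
        rw [mul_sub, mul_sub, mul_one, hdiv] at h1
        linarith
      have h2 := mul_le_mul_of_nonneg_left key (hPnn i j)
      nlinarith [h2]
    calc ∑ i, ∑ j, lam i * P i j * (Real.log (mu j) - Real.log (lam i))
        ≤ ∑ i, ∑ j, (P i j * mu j - lam i * P i j) :=
          Finset.sum_le_sum fun i _ => Finset.sum_le_sum fun j _ => tw i j
      _ = (∑ i, ∑ j, P i j * mu j) - ∑ i, ∑ j, lam i * P i j := by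
          rw [← Finset.sum_sub_distrib]
          exact Finset.sum_congr rfl fun i _ => by rw [← Finset.sum_sub_distrib]
      _ = 0 := by
          have e1 : (∑ i, ∑ j, P i j * mu j) = 1 := by
            rw [Finset.sum_comm]
            calc ∑ j, ∑ i : m, P i j * mu j = ∑ j, (∑ i : m, P i j) * mu j := by
                  exact Finset.sum_congr rfl fun j _ => (Finset.sum_mul _ _ _).symm
              _ = ∑ j, mu j := by
                  exact Finset.sum_congr rfl fun j _ => by rw [hcol j, one_mul]
              _ = 1 := hmusum
          have e2 : (∑ i, ∑ j, lam i * P i j) = 1 := by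
            calc ∑ i, ∑ j, lam i * P i j = ∑ i, lam i * ∑ j, P i j := by
                  exact Finset.sum_congr rfl fun i _ => (Finset.mul_sum _ _ _).symm
              _ = ∑ i, lam i := by
                  exact Finset.sum_congr rfl fun i _ => by rw [hrow i, mul_one]
              _ = 1 := hlamsum
          rw [e1, e2, sub_self]
  have expand : ∑ i, ∑ j, lam i * P i j * (Real.log (mu j) - Real.log (lam i))
      = (∑ i, ∑ j, lam i * (Real.log (mu j) * P i j)) - ∑ i, lam i * Real.log (lam i) := by
    have : ∀ i, ∑ j, lam i * P i j * (Real.log (mu j) - Real.log (lam i))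
        = (∑ j, lam i * (Real.log (mu j) * P i j)) - lam i * Real.log (lam i) := by
      intro i
      have h3 : ∑ j, lam i * P i j * Real.log (lam i)
          = lam i * Real.log (lam i) := by
        calc ∑ j, lam i * P i j * Real.log (lam i)
            = (lam i * Real.log (lam i)) * ∑ j, P i j := by
              rw [Finset.mul_sum]
              exact Finset.sum_congr rfl fun j _ => by ring
          _ = lam i * Real.log (lam i) := by rw [hrow i, mul_one]
      calc ∑ j, lam i * P i j * (Real.log (mu j) - Real.log (lam i))
          = ∑ j, (lam i * (Real.log (mu j) * P i j) - lam i * P i j * Real.log (lam i)) := by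
            exact Finset.sum_congr rfl fun j _ => by ring
        _ = (∑ j, lam i * (Real.log (mu j) * P i j)) - ∑ j, lam i * P i j * Real.log (lam i) :=
            Finset.sum_sub_distrib _ _
        _ = (∑ j, lam i * (Real.log (mu j) * P i j)) - lam i * Real.log (lam i) := by rw [h3]
    rw [Finset.sum_congr rfl fun i _ => this i, Finset.sum_sub_distrib]
  unfold relEnt
  rw [Complex.sub_re, t1, t2]
  linarith [step, expand.symm]

/-- the Holevo information is nonnegative. -/
theorem holevo_nonneg {d k : ℕ} {Y : Type} [Fintype Y]
    (V : Matrix (Fin d × Fin k) (Fin d × Fin k) ℂ)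
    (hV : V ∈ Matrix.unitaryGroup (Fin d × Fin k) ℂ)
    (σ : Matrix (Fin k) (Fin k) ℂ) (hσ : IsDensityMatrix σ)
    (M : Y → Matrix (Fin k) (Fin k) ℂ)
    (hM : ∑ y : Y, (M y)ᴴ * M y = 1)
    (ρ₀ : Matrix (Fin d) (Fin d) ℂ) (hρ₀ : IsDensityMatrix ρ₀)
    (m n : ℕ) (hmn : m ≤ n)
    (hp : ∀ y : Fin m → Y, 0 < recProb V σ M ρ₀ m y)
    (hcond : ∀ y : Fin m → Y, IsFaithfulDensityMatrix (condState V σ M ρ₀ n m y))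
    (hρn : IsFaithfulDensityMatrix (uncondState V σ ρ₀ n)) :
    0 ≤ holevoInfo V σ M ρ₀ n m ∧
      avgCondEntropy V σ M ρ₀ n m ≤ vnEntropy (uncondState V σ ρ₀ n) := by
  classical
  set ρn := uncondState V σ ρ₀ n with hρndef
  -- mixture identity
  have hmix : ρn = ∑ y : Fin m → Y,
      ((recProb V σ M ρ₀ m y : ℂ)) • condState V σ M ρ₀ n m y := by
    have h1 : ∀ y : Fin m → Y, ((recProb V σ M ρ₀ m y : ℂ)) • condState V σ M ρ₀ n m y
        = (Vs V σ)^[n - m] (measChain V σ M ρ₀ m y) := by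
      intro y
      rw [condState, smul_smul, mul_inv_cancel₀, one_smul]
      exact_mod_cast (hp y).ne'
    simp only [h1]
    rw [← Vs_iter_sum, sum_measChain V σ M hM, ← Function.iterate_add_apply,
      Nat.sub_add_cancel hmn]
    rfl
  set L := matLog ρn with hL
  have htr : (ρn * L).trace = ∑ y : Fin m → Y,
      (recProb V σ M ρ₀ m y : ℂ) * ((condState V σ M ρ₀ n m y) * L).trace := by
    conv_lhs => rw [hmix]
    rw [Finset.sum_mul, Matrix.trace_sum]
    refine Finset.sum_congr rfl fun y _ => ?_
    rw [smul_mul_assoc, Matrix.trace_smul, smul_eq_mul]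
  have key : vnEntropy ρn - avgCondEntropy V σ M ρ₀ n m
      = ∑ y : Fin m → Y,
          recProb V σ M ρ₀ m y * relEnt (condState V σ M ρ₀ n m y) ρn := by
    simp only [avgCondEntropy, vnEntropy, relEnt]
    rw [← hL, htr]
    simp only [Complex.neg_re, Complex.re_sum, Complex.re_ofReal_mul, Complex.sub_re,
      mul_neg, mul_sub]
    rw [Finset.sum_sub_distrib, Finset.sum_neg_distrib]
    ring
  have hnn : 0 ≤ ∑ y : Fin m → Y,
      recProb V σ M ρ₀ m y * relEnt (condState V σ M ρ₀ n m y) ρn :=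
    Finset.sum_nonneg fun y _ => mul_nonneg (hp y).le (relEnt_nonneg (hcond y) hρn)
  have hfinal : avgCondEntropy V σ M ρ₀ n m ≤ vnEntropy ρn := by linarith [key ▸ hnn]
  exact ⟨by rw [holevoInfo]; linarith, hfinal⟩
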